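/- Let H be a complex Hilbert space, (𝓛_λ)_{λ∈Λ} a net of subspace lattices on H and 𝓛 a subspace lattice on H. If every weak-operator-topology limit of a norm-bounded subnet (L_μ)_{μ∈Λ₀} with L_μ ∈ 𝓛_μ belongs to the weak-operator-topology closed convex hull Conv 𝓛 of 𝓛, then for every ξ ∈ H ⊕ H one has d(ξ, E_𝓛) ≤ liminf_{λ∈Λ} d(ξ, E_{𝓛_λ}). -/

import Mathlib

open Filter

noncomputable section

variable {H : Type*} [NormedAddCommGroup H] [InnerProductSpace ℂ H] [CompleteSpace H]

/-- An orthogonal projection: a self-adjoint idempotent bounded operator. -/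
def IsOrthoProj (L : H →L[ℂ] H) : Prop := IsSelfAdjoint L ∧ L * L = L

/-- The weak operator topology on `B(H)`. -/
def WOT (H : Type*) [NormedAddCommGroup H] [InnerProductSpace ℂ H] :
    TopologicalSpace (H →L[ℂ] H) :=
  TopologicalSpace.induced
    (fun T : H →L[ℂ] H => fun p : H × H => (inner ℂ (T p.1) p.2 : ℂ)) inferInstance

/-- The strong operator topology on `B(H)`. -/
def SOT (H : Type*) [NormedAddCommGroup H] [InnerProductSpace ℂ H] :
    TopologicalSpace (H →L[ℂ] H) :=
  TopologicalSpace.induced (fun T : H →L[ℂ] H => (T : H → H)) inferInstance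

/-- A subspace lattice: an SOT-closed sublattice of the lattice of
orthogonal projections (lattice operations described through ranges). -/
structure IsSubspaceLattice (𝓛 : Set (H →L[ℂ] H)) : Prop where
  nonempty : 𝓛.Nonempty
  proj : ∀ L ∈ 𝓛, IsOrthoProj L
  inf_mem : ∀ P ∈ 𝓛, ∀ Q ∈ 𝓛, ∃ R ∈ 𝓛,
    LinearMap.range (R : H →ₗ[ℂ] H) = LinearMap.range (P : H →ₗ[ℂ] H) ⊓ LinearMap.range (Q : H →ₗ[ℂ] H)
  sup_mem : ∀ P ∈ 𝓛, ∀ Q ∈ 𝓛, ∃ R ∈ 𝓛,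
    LinearMap.range (R : H →ₗ[ℂ] H) = (LinearMap.range (P : H →ₗ[ℂ] H) ⊔ LinearMap.range (Q : H →ₗ[ℂ] H)).topologicalClosure
  sotClosed : @IsClosed _ (SOT H) 𝓛

/-- The set `E_𝓛 ⊆ H ⊕ H` (where `H ⊕ H` is the Hilbert space direct sum,
realized as `WithLp 2 (H × H)`). -/
def Esec (𝓛 : Set (H →L[ℂ] H)) : Set (WithLp 2 (H × H)) :=
  {p | ∃ L ∈ 𝓛, L (WithLp.equiv 2 (H × H) p).1 = (WithLp.equiv 2 (H × H) p).1 ∧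
      L (WithLp.equiv 2 (H × H) p).2 = 0}

/-- WOT limsup of a net of sets of operators: all WOT-limits of norm-bounded
subnets (subnets are encoded by nontrivial filters finer than `atTop`). -/
def wotLimsup {Λ : Type*} [Preorder Λ] (F : Λ → Set (H →L[ℂ] H)) :
    Set (H →L[ℂ] H) :=
  {A | ∃ (T : Λ → H →L[ℂ] H) (f : Filter Λ), f.NeBot ∧ f ≤ atTop ∧
      (∀ᶠ l in f, T l ∈ F l) ∧ (∃ C : ℝ, ∀ᶠ l in f, ‖T l‖ ≤ C) ∧
      Tendsto T f (@nhds _ (WOT H) A)}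

local notation "⟪" x ", " y "⟫" => @inner ℂ _ _ x y

set_option linter.unusedSectionVars false

theorem IsOrthoProj.apply_self {L : H →L[ℂ] H} (hL : IsOrthoProj L) (v : H) :
    L (L v) = L v := by
  have := congrFun (congrArg DFunLike.coe hL.2) v
  simpa using this

theorem IsOrthoProj.normSq {L : H →L[ℂ] H} (hL : IsOrthoProj L) (v : H) :
    ‖L v‖ ^ 2 = RCLike.re ⟪L v, v⟫ := by
  have hadj : ContinuousLinearMap.adjoint L = L :=
    (ContinuousLinearMap.isSelfAdjoint_iff').mp hL.1
  have h := ContinuousLinearMap.adjoint_inner_right L (L v) v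
  rw [hadj, hL.apply_self v] at h
  rw [← h, inner_self_eq_norm_sq (𝕜 := ℂ)]

theorem IsOrthoProj.norm_apply_le {L : H →L[ℂ] H} (hL : IsOrthoProj L) (v : H) :
    ‖L v‖ ≤ ‖v‖ := by
  have h := hL.normSq v
  have h2 : RCLike.re ⟪L v, v⟫ ≤ ‖L v‖ * ‖v‖ := re_inner_le_norm _ _
  nlinarith [norm_nonneg (L v), norm_nonneg v]

theorem IsOrthoProj.one_sub {L : H →L[ℂ] H} (hL : IsOrthoProj L) : IsOrthoProj (1 - L) := by
  refine ⟨(IsSelfAdjoint.one _).sub hL.1, ?_⟩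
  rw [sub_mul, mul_sub, mul_sub, mul_one, one_mul, hL.2]
  simp

theorem IsOrthoProj.norm_le_one {L : H →L[ℂ] H} (hL : IsOrthoProj L) : ‖L‖ ≤ 1 :=
  ContinuousLinearMap.opNorm_le_bound L zero_le_one fun v => by
    simpa using hL.norm_apply_le v
def Phi (H : Type*) [NormedAddCommGroup H] [InnerProductSpace ℂ H] :
    (H →L[ℂ] H) → ((H × H) → ℂ) :=
  fun T => fun p => ⟪T p.1, p.2⟫

theorem Phi_injective : Function.Injective (Phi H) := by
  intro T S h
  ext x
  refine ext_inner_right ℂ fun v => ?_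
  exact congrFun h (x, v)

theorem wot_continuous_Phi : @Continuous _ _ (WOT H) _ (Phi H) :=
  continuous_induced_dom

def goodSet (H : Type*) [NormedAddCommGroup H] [InnerProductSpace ℂ H] :
    Set ((H × H) → ℂ) :=
  {f | (∀ x y z, f (x, y + z) = f (x, y) + f (x, z)) ∧
    (∀ x y (a : ℂ), f (x, a • y) = a * f (x, y)) ∧
    (∀ x z y, f (x + z, y) = f (x, y) + f (z, y)) ∧
    (∀ x y (a : ℂ), f (a • x, y) = starRingEnd ℂ a * f (x, y)) ∧
    (∀ x y, ‖f (x, y)‖ ≤ ‖x‖ * ‖y‖)}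

theorem goodSet_closed : IsClosed (goodSet H) := by
  unfold goodSet
  simp only [Set.setOf_and, Set.setOf_forall]
  refine IsClosed.inter ?_ (IsClosed.inter ?_ (IsClosed.inter ?_ (IsClosed.inter ?_ ?_)))
  · exact isClosed_iInter fun x => isClosed_iInter fun y => isClosed_iInter fun z =>
      isClosed_eq (continuous_apply _) ((continuous_apply (x, y)).add (continuous_apply (x, z)))
  · exact isClosed_iInter fun x => isClosed_iInter fun y => isClosed_iInter fun a =>
      isClosed_eq (continuous_apply _) ((continuous_const).mul (continuous_apply _))
  · exact isClosed_iInter fun x => isClosed_iInter fun z => isClosed_iInter fun y =>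
      isClosed_eq (continuous_apply _) ((continuous_apply (x, y)).add (continuous_apply (z, y)))
  · exact isClosed_iInter fun x => isClosed_iInter fun y => isClosed_iInter fun a =>
      isClosed_eq (continuous_apply _) ((continuous_const).mul (continuous_apply _))
  · exact isClosed_iInter fun x => isClosed_iInter fun y =>
      isClosed_le ((continuous_apply _).norm) continuous_const

theorem image_ball_eq_goodSet :
    Phi H '' {T : H →L[ℂ] H | ‖T‖ ≤ 1} = goodSet H := by
  apply Set.Subset.antisymm
  · rintro _ ⟨T, hT, rfl⟩
    refine ⟨fun x y z => by simp [Phi, inner_add_right],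
      fun x y a => by simp [Phi, inner_smul_right],
      fun x z y => by simp [Phi, inner_add_left],
      fun x y a => by simp [Phi, inner_smul_left, mul_comm],
      fun x y => ?_⟩
    calc ‖⟪T x, y⟫‖ ≤ ‖T x‖ * ‖y‖ := norm_inner_le_norm _ _
      _ ≤ (‖T‖ * ‖x‖) * ‖y‖ := by
          gcongr; exact T.le_opNorm x
      _ ≤ 1 * ‖x‖ * ‖y‖ :=
          mul_le_mul_of_nonneg_right (mul_le_mul_of_nonneg_right hT (norm_nonneg x)) (norm_nonneg y)
      _ = ‖x‖ * ‖y‖ := by ring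
  · rintro f ⟨hadd, hsmul, hadd', hsmul', hbound⟩
    -- construct the operator
    set ℓ : H → (H →L[ℂ] ℂ) := fun x => LinearMap.mkContinuous
      { toFun := fun y => f (x, y)
        map_add' := fun y z => hadd x y z
        map_smul' := fun a y => hsmul x y a } ‖x‖
      (fun y => by simpa [mul_comm] using hbound x y) with hℓ
    set g : H → H := fun x => (InnerProductSpace.toDual ℂ H).symm (ℓ x) with hg
    have hginner : ∀ x y, ⟪g x, y⟫ = f (x, y) := fun x y =>
      InnerProductSpace.toDual_symm_apply
    have hgnorm : ∀ x, ‖g x‖ ≤ ‖x‖ := by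
      intro x
      rw [hg]
      rw [LinearIsometryEquiv.norm_map]
      exact LinearMap.mkContinuous_norm_le _ (norm_nonneg x) _
    set T : H →L[ℂ] H := LinearMap.mkContinuous
      { toFun := g
        map_add' := fun x z => by
          refine ext_inner_right ℂ fun v => ?_
          rw [hginner, inner_add_left, hginner, hginner]
          exact hadd' x z v
        map_smul' := fun a x => by
          refine ext_inner_right ℂ fun v => ?_
          rw [hginner, RingHom.id_apply, inner_smul_left, hginner]
          exact hsmul' x v a } 1
      (fun x => by simpa using hgnorm x) with hT
    refine ⟨T, ?_, ?_⟩
    · exact LinearMap.mkContinuous_norm_le _ zero_le_one _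
    · funext p
      show ⟪g p.1, p.2⟫ = f p
      rw [hginner]

theorem wot_isCompact_ball : @IsCompact _ (WOT H) {T : H →L[ℂ] H | ‖T‖ ≤ 1} := by
  have hemb : @Topology.IsEmbedding _ _ (WOT H) _ (Phi H) :=
    @Topology.IsEmbedding.mk _ _ (WOT H) _ _
      (@Topology.IsInducing.mk _ _ (WOT H) _ _ rfl) Phi_injective
  rw [@Topology.IsEmbedding.isCompact_iff _ _ (WOT H) _ _ _ hemb]
  rw [image_ball_eq_goodSet]
  have hsub : goodSet H ⊆ Set.pi Set.univ
      (fun p : H × H => Metric.closedBall (0 : ℂ) (‖p.1‖ * ‖p.2‖)) := by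
    intro f hf p _
    simpa [Complex.dist_eq] using hf.2.2.2.2 p.1 p.2
  exact IsCompact.of_isClosed_subset
    (isCompact_univ_pi fun p => isCompact_closedBall _ _) goodSet_closed hsub

theorem wot_continuous_inner_re (x y : H) :
    @Continuous _ _ (WOT H) _ (fun T : H →L[ℂ] H => RCLike.re ⟪T x, y⟫) := by
  have h : @Continuous _ _ (WOT H) _ (fun T : H →L[ℂ] H => (⟪T x, y⟫ : ℂ)) :=
    @Continuous.comp _ _ _ (WOT H) _ _ _ _ (continuous_apply (x, y)) wot_continuous_Phi
  exact @Continuous.comp _ _ _ (WOT H) _ _ _ _ RCLike.continuous_re h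

/-- the affine functional `T ↦ ‖ξ₁‖² - re⟪Tξ₁,ξ₁⟫ + re⟪Tξ₂,ξ₂⟫`. -/
def phiF (x y : H) (T : H →L[ℂ] H) : ℝ :=
  ‖x‖ ^ 2 - RCLike.re ⟪T x, x⟫ + RCLike.re ⟪T y, y⟫

theorem wot_continuous_phiF (x y : H) : @Continuous _ _ (WOT H) _ (phiF x y) := by
  have hg : Continuous (fun f : (H × H) → ℂ =>
      ‖x‖ ^ 2 - RCLike.re (f (x, x)) + RCLike.re (f (y, y))) :=
    (continuous_const.sub (RCLike.continuous_re.comp (continuous_apply (x, x)))).add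
      (RCLike.continuous_re.comp (continuous_apply (y, y)))
  exact @Continuous.comp _ _ _ (WOT H) _ _ _ _ hg wot_continuous_Phi

theorem phiF_eq {L : H →L[ℂ] H} (hL : IsOrthoProj L) (x y : H) :
    phiF x y L = ‖x - L x‖ ^ 2 + ‖L y‖ ^ 2 := by
  have h1 : ‖x - L x‖ ^ 2 = ‖x‖ ^ 2 - 2 * RCLike.re ⟪x, L x⟫ + ‖L x‖ ^ 2 :=
    norm_sub_sq (𝕜 := ℂ) x (L x)
  have h2 := hL.normSq x
  have h3 := hL.normSq y
  have h4 : RCLike.re ⟪x, L x⟫ = RCLike.re ⟪L x, x⟫ := inner_re_symm _ _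
  unfold phiF
  rw [h1, h4, ← h2, ← h3]
  ring

theorem phiF_isLinear_part (x y : H) :
    IsLinearMap ℝ (fun T : H →L[ℂ] H =>
      RCLike.re ⟪T y, y⟫ - RCLike.re ⟪T x, x⟫) := by
  constructor
  · intro T S
    simp only [ContinuousLinearMap.add_apply, inner_add_left, map_add]
    ring
  · intro c T
    simp only [ContinuousLinearMap.smul_apply]
    have hx : ⟪c • T x, x⟫ = c • ⟪T x, x⟫ := by
      simpa using inner_smul_real_left (𝕜 := ℂ) (T x) x c
    have hy : ⟪c • T y, y⟫ = c • ⟪T y, y⟫ := by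
      simpa using inner_smul_real_left (𝕜 := ℂ) (T y) y c
    rw [hx, hy, RCLike.smul_re, RCLike.smul_re, smul_eq_mul]
    ring


theorem zero_mem_Esec {𝓛 : Set (H →L[ℂ] H)} (h : 𝓛.Nonempty) : (0 : WithLp 2 (H × H)) ∈ Esec 𝓛 := by
  obtain ⟨L, hL⟩ := h
  exact ⟨L, hL, by simp, by simp⟩

/-- squared distance in the 2-product. -/
theorem dist_sq_eq (p q : WithLp 2 (H × H)) :
    dist p q ^ 2 = ‖p.fst - q.fst‖ ^ 2 + ‖p.snd - q.snd‖ ^ 2 := by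
  rw [WithLp.prod_dist_eq_of_L2, Real.sq_sqrt (by positivity)]
  simp [dist_eq_norm]

/-- lower bound : each `L ∈ 𝓛` dominates the squared distance. -/
theorem infDist_sq_le_phiF {𝓛 : Set (H →L[ℂ] H)} (h𝓛 : ∀ L ∈ 𝓛, IsOrthoProj L)
    {L : H →L[ℂ] H} (hL : L ∈ 𝓛) (ξ : WithLp 2 (H × H)) :
    Metric.infDist ξ (Esec 𝓛) ^ 2 ≤ phiF ξ.fst ξ.snd L := by
  have hP := h𝓛 L hL
  set q : WithLp 2 (H × H) := (WithLp.equiv 2 (H × H)).symm (L ξ.fst, ξ.snd - L ξ.snd) with hq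
  have hqmem : q ∈ Esec 𝓛 := by
    refine ⟨L, hL, ?_, ?_⟩
    · show L (L ξ.fst) = L ξ.fst
      exact hP.apply_self _
    · show L (ξ.snd - L ξ.snd) = 0
      rw [map_sub, hP.apply_self, sub_self]
  have hd : dist ξ q ^ 2 = phiF ξ.fst ξ.snd L := by
    rw [dist_sq_eq, phiF_eq hP]
    have h1 : q.fst = L ξ.fst := rfl
    have h2 : q.snd = ξ.snd - L ξ.snd := rfl
    rw [h1, h2, sub_sub_cancel]
  have hle : Metric.infDist ξ (Esec 𝓛) ≤ dist ξ q := Metric.infDist_le_dist_of_mem hqmem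
  calc Metric.infDist ξ (Esec 𝓛) ^ 2 ≤ dist ξ q ^ 2 :=
        pow_le_pow_left₀ Metric.infDist_nonneg hle 2
    _ = phiF ξ.fst ξ.snd L := hd

/-- upper bound : any point of `Esec` dominates some `phiF L`. -/
theorem exists_phiF_le_dist_sq {𝓛 : Set (H →L[ℂ] H)} (h𝓛 : ∀ L ∈ 𝓛, IsOrthoProj L)
    {p : WithLp 2 (H × H)} (hp : p ∈ Esec 𝓛) (ξ : WithLp 2 (H × H)) :
    ∃ L ∈ 𝓛, phiF ξ.fst ξ.snd L ≤ dist ξ p ^ 2 := by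
  obtain ⟨L, hL, hx, hy⟩ := hp
  have hP := h𝓛 L hL
  refine ⟨L, hL, ?_⟩
  rw [phiF_eq hP, dist_sq_eq]
  have hfst : ξ.fst - L ξ.fst = (1 - L) (ξ.fst - p.fst) := by
    have hx' : L p.fst = p.fst := hx
    simp [ContinuousLinearMap.sub_apply, map_sub, hx']
  have hsnd : L ξ.snd = L (ξ.snd - p.snd) := by
    have hy' : L p.snd = 0 := hy
    rw [map_sub, hy', sub_zero]
  have h1 : ‖ξ.fst - L ξ.fst‖ ≤ ‖ξ.fst - p.fst‖ := by
    rw [hfst]; exact hP.one_sub.norm_apply_le _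
  have h2 : ‖L ξ.snd‖ ≤ ‖ξ.snd - p.snd‖ := by
    rw [hsnd]; exact hP.norm_apply_le _
  have h1' := pow_le_pow_left₀ (norm_nonneg _) h1 2
  have h2' := pow_le_pow_left₀ (norm_nonneg _) h2 2
  linarith

theorem infDist_sq_le_phiF_of_closure {𝓛 : Set (H →L[ℂ] H)} (h𝓛 : ∀ L ∈ 𝓛, IsOrthoProj L)
    (ξ : WithLp 2 (H × H)) {A : H →L[ℂ] H}
    (hA : A ∈ @closure _ (WOT H) (convexHull ℝ 𝓛)) :
    Metric.infDist ξ (Esec 𝓛) ^ 2 ≤ phiF ξ.fst ξ.snd A := by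
  set c : ℝ := Metric.infDist ξ (Esec 𝓛) ^ 2 - ‖ξ.fst‖ ^ 2 with hc
  set ψ : (H →L[ℂ] H) → ℝ := fun T =>
    RCLike.re ⟪T ξ.snd, ξ.snd⟫ - RCLike.re ⟪T ξ.fst, ξ.fst⟫ with hψdef
  have hψlin : IsLinearMap ℝ ψ := phiF_isLinear_part ξ.fst ξ.snd
  have hphi : ∀ T, phiF ξ.fst ξ.snd T = ‖ξ.fst‖ ^ 2 + ψ T := by
    intro T; simp only [phiF, hψdef]; ring
  have hS : 𝓛 ⊆ {T | c ≤ ψ T} := by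
    intro L hL
    have h := infDist_sq_le_phiF h𝓛 hL ξ
    rw [hphi] at h
    simp only [Set.mem_setOf_eq, hc]
    linarith
  have hconv : Convex ℝ {T | c ≤ ψ T} := convex_halfSpace_ge hψlin c
  have hg : Continuous (fun f : (H × H) → ℂ =>
      RCLike.re (f (ξ.snd, ξ.snd)) - RCLike.re (f (ξ.fst, ξ.fst))) :=
    (RCLike.continuous_re.comp (continuous_apply (ξ.snd, ξ.snd))).sub
      (RCLike.continuous_re.comp (continuous_apply (ξ.fst, ξ.fst)))
  have hψcont : @Continuous _ _ (WOT H) _ ψ :=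
    @Continuous.comp _ _ _ (WOT H) _ _ _ _ hg wot_continuous_Phi
  have hclosed : @IsClosed _ (WOT H) {T | c ≤ ψ T} :=
    (@continuous_iff_isClosed _ _ (WOT H) _ ψ).mp hψcont (Set.Ici c) isClosed_Ici
  have hsub := @closure_minimal _ (WOT H) _ _ (convexHull_min hS hconv) hclosed
  have hmem : A ∈ {T | c ≤ ψ T} := hsub hA
  rw [hphi]
  simp only [Set.mem_setOf_eq, hc] at hmem
  linarith

/-- If every WOT limit of a norm-bounded subnet chosen from the
net of subspace lattices `𝓛l` lies in the WOT-closed convex hull of the subspace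
lattice `𝓛`, then `d(ξ, E_𝓛) ≤ liminf_λ d(ξ, E_{𝓛_λ})` for every `ξ ∈ H ⊕ H`. -/
theorem norms_of_vector_functionals_stmt0
    {Λ : Type*} [Nonempty Λ] [Preorder Λ] [IsDirected Λ (· ≤ ·)]
    (𝓛l : Λ → Set (H →L[ℂ] H)) (𝓛 : Set (H →L[ℂ] H))
    (h𝓛l : ∀ l, IsSubspaceLattice (𝓛l l)) (h𝓛 : IsSubspaceLattice 𝓛)
    (hlim : wotLimsup 𝓛l ⊆ @closure _ (WOT H) (convexHull ℝ 𝓛)) :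
    ∀ ξ : WithLp 2 (H × H),
      Metric.infDist ξ (Esec 𝓛) ≤
        Filter.liminf (fun l => Metric.infDist ξ (Esec (𝓛l l))) Filter.atTop := by
  intro ξ
  set u : Λ → ℝ := fun l => Metric.infDist ξ (Esec (𝓛l l)) with hu
  have h0mem : ∀ l, (0 : WithLp 2 (H × H)) ∈ Esec (𝓛l l) :=
    fun l => zero_mem_Esec (h𝓛l l).nonempty
  have hub : ∀ l, u l ≤ ‖ξ‖ := fun l => by
    simpa [dist_zero_right] using Metric.infDist_le_dist_of_mem (h0mem l)
  have hbdd : IsBoundedUnder (· ≤ ·) atTop u :=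
    ⟨‖ξ‖, Filter.eventually_map.mpr (Eventually.of_forall hub)⟩
  have hcob : IsCoboundedUnder (· ≥ ·) atTop u := hbdd.isCoboundedUnder_ge
  set c : ℝ := liminf u atTop with hc
  have hc0 : 0 ≤ c :=
    le_liminf_of_le hcob (Eventually.of_forall fun l => Metric.infDist_nonneg)
  refine le_of_forall_pos_le_add fun ε hε => ?_
  have hfreq : ∃ᶠ l in atTop, u l < c + ε :=
    frequently_lt_of_liminf_lt hcob (by linarith)
  have hne : (atTop ⊓ 𝓟 {l | u l < c + ε}).NeBot := frequently_iff_neBot.mp hfreq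
  have hchoice : ∀ l, ∃ L, L ∈ 𝓛l l ∧
      (u l < c + ε → phiF ξ.fst ξ.snd L ≤ (c + ε) ^ 2) := by
    intro l
    by_cases h : u l < c + ε
    · obtain ⟨p, hp, hdp⟩ := (Metric.infDist_lt_iff ⟨_, h0mem l⟩).mp h
      obtain ⟨L, hL, hphi⟩ := exists_phiF_le_dist_sq (h𝓛l l).proj hp ξ
      exact ⟨L, hL, fun _ =>
        hphi.trans (pow_le_pow_left₀ dist_nonneg hdp.le 2)⟩
    · exact ⟨(h𝓛l l).nonempty.choose, (h𝓛l l).nonempty.choose_spec,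
        fun h' => absurd h' h⟩
  choose T hTmem hTphi using hchoice
  have hTnorm : ∀ l, ‖T l‖ ≤ 1 := fun l => ((h𝓛l l).proj _ (hTmem l)).norm_le_one
  haveI := hne
  set U : Ultrafilter Λ := Ultrafilter.of (atTop ⊓ 𝓟 {l | u l < c + ε}) with hU
  have hUle : (U : Filter Λ) ≤ atTop ⊓ 𝓟 {l | u l < c + ε} := Ultrafilter.of_le _
  have hmapball : (U.map T : Filter _) ≤ 𝓟 {S : H →L[ℂ] H | ‖S‖ ≤ 1} :=
    le_principal_iff.mpr (Filter.mem_map.mpr (Filter.univ_mem' fun l => hTnorm l))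
  obtain ⟨A, hAball, hAle⟩ := @IsCompact.ultrafilter_le_nhds _ (WOT H) _ wot_isCompact_ball (U.map T) hmapball
  have hTendsto : Tendsto T (U : Filter Λ) (@nhds _ (WOT H) A) := by
    rw [Ultrafilter.coe_map] at hAle
    exact hAle
  have hAmem : A ∈ wotLimsup 𝓛l :=
    ⟨T, U, U.neBot, hUle.trans inf_le_left, Eventually.of_forall hTmem,
      ⟨1, Eventually.of_forall hTnorm⟩, hTendsto⟩
  have h1 : Metric.infDist ξ (Esec 𝓛) ^ 2 ≤ phiF ξ.fst ξ.snd A :=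
    infDist_sq_le_phiF_of_closure h𝓛.proj ξ (hlim hAmem)
  have h2 : phiF ξ.fst ξ.snd A ≤ (c + ε) ^ 2 := by
    have hcont := wot_continuous_phiF (H := H) ξ.fst ξ.snd
    have htend : Tendsto (fun l => phiF ξ.fst ξ.snd (T l)) (U : Filter Λ)
        (nhds (phiF ξ.fst ξ.snd A)) :=
      (@Continuous.tendsto _ _ (WOT H) _ _ hcont A).comp hTendsto
    refine le_of_tendsto htend ?_
    have hev : ∀ᶠ l in (U : Filter Λ), u l < c + ε :=
      le_principal_iff.mp (hUle.trans inf_le_right)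
    exact hev.mono fun l hl => hTphi l hl
  have h3 : Metric.infDist ξ (Esec 𝓛) ^ 2 ≤ (c + ε) ^ 2 := h1.trans h2
  nlinarith [Metric.infDist_nonneg (x := ξ) (s := Esec 𝓛), hc0, hε.le]
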